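/- A finite connected simple graph G (with at least 2 vertices) is complete if and only if W(G) = PW(G) = WW(G) = PWW(G). -/

import Mathlib

open Finset SimpleGraph

noncomputable section

/-- Eccentricity of a vertex: maximum distance to any vertex. -/
def ecc {V : Type*} [Fintype V] (G : SimpleGraph V) (u : V) : ℕ :=
  Finset.univ.sup (G.dist u)

/-- Diameter: maximum eccentricity. -/
def gdiam {V : Type*} [Fintype V] (G : SimpleGraph V) : ℕ :=
  Finset.univ.sup (ecc G)

/-- The set of peripheral vertices: vertices of maximum eccentricity. -/
def peri {V : Type*} [Fintype V] [DecidableEq V] (G : SimpleGraph V) : Finset V :=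
  Finset.univ.filter (fun u => ecc G u = gdiam G)

/-- Wiener index: sum of distances over unordered pairs of distinct vertices. -/
def wiener {V : Type*} [Fintype V] [DecidableEq V] (G : SimpleGraph V) : ℚ :=
  (1/2) * ∑ p ∈ (Finset.univ : Finset V).offDiag, (G.dist p.1 p.2 : ℚ)

/-- Hyper-Wiener index. -/
def hyperWiener {V : Type*} [Fintype V] [DecidableEq V] (G : SimpleGraph V) : ℚ :=
  (1/4) * ∑ p ∈ (Finset.univ : Finset V).offDiag,
    ((G.dist p.1 p.2 : ℚ) + (G.dist p.1 p.2 : ℚ) ^ 2)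

/-- Peripheral Wiener index. -/
def periWiener {V : Type*} [Fintype V] [DecidableEq V] (G : SimpleGraph V) : ℚ :=
  (1/2) * ∑ p ∈ (peri G).offDiag, (G.dist p.1 p.2 : ℚ)

/-- Peripheral hyper-Wiener index. -/
def periHyperWiener {V : Type*} [Fintype V] [DecidableEq V] (G : SimpleGraph V) : ℚ :=
  (1/4) * ∑ p ∈ (peri G).offDiag,
    ((G.dist p.1 p.2 : ℚ) + (G.dist p.1 p.2 : ℚ) ^ 2)

end

theorem complete_iff_indices_eq {V : Type*} [Fintype V] [DecidableEq V]
    (G : SimpleGraph V) (hG : G.Connected) (h2 : 2 ≤ Fintype.card V) :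
    G = ⊤ ↔ (wiener G = periWiener G ∧ wiener G = hyperWiener G ∧
      wiener G = periHyperWiener G) := by
  constructor
  · rintro rfl
    have hd : ∀ u v : V, u ≠ v → (⊤ : SimpleGraph V).dist u v = 1 := fun u v h =>
      SimpleGraph.dist_eq_one_iff_adj.mpr h
    have hecc : ∀ u : V, ecc (⊤ : SimpleGraph V) u = 1 := by
      intro u
      obtain ⟨v, hv⟩ := Fintype.exists_ne_of_one_lt_card h2 u
      apply le_antisymm
      · apply Finset.sup_le
        intro w _
        rcases eq_or_ne u w with rfl | h
        · simp [SimpleGraph.dist_self]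
        · rw [hd u w h]
      · calc 1 = (⊤ : SimpleGraph V).dist u v := (hd u v (Ne.symm hv)).symm
          _ ≤ _ := Finset.le_sup (Finset.mem_univ v)
    have hdiam : gdiam (⊤ : SimpleGraph V) = 1 := by
      unfold gdiam
      obtain ⟨u⟩ := hG.nonempty
      apply le_antisymm
      · exact Finset.sup_le fun w _ => le_of_eq (hecc w)
      · exact le_trans (le_of_eq (hecc u).symm) (Finset.le_sup (Finset.mem_univ u))
    have hperi : peri (⊤ : SimpleGraph V) = Finset.univ := by
      unfold peri
      rw [Finset.filter_eq_self]
      intro u _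
      rw [hecc u, hdiam]
    have hds : ∀ p ∈ (Finset.univ : Finset V).offDiag,
        ((⊤ : SimpleGraph V).dist p.1 p.2 : ℚ) = 1 := by
      intro p hp
      rw [Finset.mem_offDiag] at hp
      rw [hd _ _ hp.2.2]; norm_num
    refine ⟨?_, ?_, ?_⟩
    · rw [wiener, periWiener, hperi]
    · have e1 : ∑ p ∈ (Finset.univ : Finset V).offDiag,
          (((⊤ : SimpleGraph V).dist p.1 p.2 : ℚ)) = ((Finset.univ : Finset V).offDiag.card : ℚ) := by
        rw [Finset.sum_congr rfl hds]; simp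
      have e2 : ∑ p ∈ (Finset.univ : Finset V).offDiag,
          (((⊤ : SimpleGraph V).dist p.1 p.2 : ℚ) + ((⊤ : SimpleGraph V).dist p.1 p.2 : ℚ) ^ 2)
          = 2 * ((Finset.univ : Finset V).offDiag.card : ℚ) := by
        rw [Finset.sum_congr rfl (fun p hp => by rw [hds p hp] : ∀ p ∈ (Finset.univ : Finset V).offDiag,
          (((⊤ : SimpleGraph V).dist p.1 p.2 : ℚ) + ((⊤ : SimpleGraph V).dist p.1 p.2 : ℚ) ^ 2) = 1 + 1 ^ 2)]
        simp; ring
      rw [wiener, hyperWiener, e1, e2]; ring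
    · have e1 : ∑ p ∈ (Finset.univ : Finset V).offDiag,
          (((⊤ : SimpleGraph V).dist p.1 p.2 : ℚ)) = ((Finset.univ : Finset V).offDiag.card : ℚ) := by
        rw [Finset.sum_congr rfl hds]; simp
      have e2 : ∑ p ∈ (Finset.univ : Finset V).offDiag,
          (((⊤ : SimpleGraph V).dist p.1 p.2 : ℚ) + ((⊤ : SimpleGraph V).dist p.1 p.2 : ℚ) ^ 2)
          = 2 * ((Finset.univ : Finset V).offDiag.card : ℚ) := by
        rw [Finset.sum_congr rfl (fun p hp => by rw [hds p hp] : ∀ p ∈ (Finset.univ : Finset V).offDiag,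
          (((⊤ : SimpleGraph V).dist p.1 p.2 : ℚ) + ((⊤ : SimpleGraph V).dist p.1 p.2 : ℚ) ^ 2) = 1 + 1 ^ 2)]
        simp; ring
      rw [wiener, periHyperWiener, hperi, e1, e2]; ring
  · rintro ⟨-, h, -⟩
    have key : ∀ p ∈ (Finset.univ : Finset V).offDiag,
        ((G.dist p.1 p.2 : ℚ) ^ 2 - (G.dist p.1 p.2 : ℚ)) = 0 := by
      have hsum : ∑ p ∈ (Finset.univ : Finset V).offDiag,
          ((G.dist p.1 p.2 : ℚ) ^ 2 - (G.dist p.1 p.2 : ℚ)) = 0 := by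
        rw [wiener, hyperWiener] at h
        rw [Finset.sum_sub_distrib]
        have := h
        rw [Finset.sum_add_distrib] at this
        linarith
      have hnn : ∀ p ∈ (Finset.univ : Finset V).offDiag,
          0 ≤ ((G.dist p.1 p.2 : ℚ) ^ 2 - (G.dist p.1 p.2 : ℚ)) := by
        intro p hp
        rw [Finset.mem_offDiag] at hp
        have h1 : (1 : ℚ) ≤ (G.dist p.1 p.2 : ℚ) := by
          exact_mod_cast hG.pos_dist_of_ne hp.2.2
        nlinarith
      exact fun p hp => le_antisymm
        (le_of_eq (by
          have := (Finset.sum_eq_zero_iff_of_nonneg hnn).mp hsum p hp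
          exact this)) (hnn p hp)
    ext u v
    simp only [SimpleGraph.top_adj]
    constructor
    · exact fun hadj => hadj.ne
    · intro hne
      have hp : (u, v) ∈ (Finset.univ : Finset V).offDiag := by
        simp [Finset.mem_offDiag, hne]
      have := key (u, v) hp
      have h1 : (1 : ℚ) ≤ (G.dist u v : ℚ) := by
        exact_mod_cast hG.pos_dist_of_ne hne
      have hd1 : (G.dist u v : ℚ) = 1 := by nlinarith
      have : G.dist u v = 1 := by exact_mod_cast hd1
      exact SimpleGraph.dist_eq_one_iff_adj.mp this
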